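/- The subgroup H = ⟨X ∪ Θ⟩_{M(G)} of the Miller Machine M(G) is isomorphic to the direct product F(X) × F(Θ). Moreover, the homomorphism φ : H → F(Θ) defined by φ(x) = 1 for x ∈ X and φ(θ_α) = θ_α for α ∈ X ∪ R restricts to an isomorphism from K_{−1} onto F(Θ), and the homomorphism φ' : H → F(Θ) defined by φ'(θ_x x) = θ_x and φ'(θ_r r) = θ_r restricts to an isomorphism from K_1 onto F(Θ). In particular, K_{−1} is a free group freely generated by {θ_x x : x ∈ X} ∪ {θ_r : r ∈ R}, and K_1 is a free group freely generated by {θ_x x : x ∈ X} ∪ {θ_r r : r ∈ R}. -/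

import Mathlib

/-!
Common setup: a finitely presented group `G = ⟨X ∣ R⟩` (`X` a finite set, `R` a finite
nonempty set of words of the free group `F(X)`) and its Miller machine `M(G)`,
the group generated by `X ∪ Θ ∪ {q}`, where `Θ = {θ_α : α ∈ X ∪ R}`, subject to
the relations `θ_α x = x θ_α` (`x ∈ X`, `α ∈ X ∪ R`), `θ_x x q = q x θ_x` (`x ∈ X`)
and `θ_r q = q r θ_r` (`r ∈ R`).
-/

namespace Miller

noncomputable section

/-- Index type for the letters `Θ`: one letter `θ_α` for each `α ∈ X ∪ R`
(since `X ∩ R = ∅`, the disjoint sum is faithful). -/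
abbrev ThIdx (X : Type) (R : Finset (FreeGroup X)) : Type := X ⊕ {r : FreeGroup X // r ∈ R}

/-- The generators of the Miller machine: the letters of `X`, the letters `Θ`, and `q`. -/
abbrev Gen (X : Type) (R : Finset (FreeGroup X)) : Type := X ⊕ (ThIdx X R ⊕ Unit)

variable (X : Type) (R : Finset (FreeGroup X))

/-- The letter `x ∈ X`, as a word on the generators of `M(G)`. -/
def xg (x : X) : FreeGroup (Gen X R) := FreeGroup.of (Sum.inl x)

/-- The letter `θ_α`, as a word on the generators of `M(G)`. -/
def θg (a : ThIdx X R) : FreeGroup (Gen X R) := FreeGroup.of (Sum.inr (Sum.inl a))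

/-- The letter `q`, as a word on the generators of `M(G)`. -/
def qg : FreeGroup (Gen X R) := FreeGroup.of (Sum.inr (Sum.inr ()))

/-- A word on `X` is in particular a word on the generators of `M(G)`. -/
def ofX : FreeGroup X →* FreeGroup (Gen X R) := FreeGroup.map Sum.inl

/-- The defining relators of the Miller machine `M(G)`. -/
def rels : Set (FreeGroup (Gen X R)) :=
  {w | (∃ (a : ThIdx X R) (x : X),
          w = θg X R a * xg X R x * (xg X R x * θg X R a)⁻¹) ∨
       (∃ x : X,
          w = θg X R (Sum.inl x) * xg X R x * qg X R *
              (qg X R * xg X R x * θg X R (Sum.inl x))⁻¹) ∨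
       (∃ r : {r : FreeGroup X // r ∈ R},
          w = θg X R (Sum.inr r) * qg X R *
              (qg X R * ofX X R r.1 * θg X R (Sum.inr r))⁻¹)}

/-- The group `G = ⟨X ∣ R⟩`. -/
abbrev G := PresentedGroup (R : Set (FreeGroup X))

/-- The Miller machine `M(G)`. -/
abbrev M := PresentedGroup (rels X R)

/-- The element of `G` represented by a word on `X`. -/
def toG : FreeGroup X →* G X R := PresentedGroup.mk _

/-- The element of `M(G)` represented by a word on the generators. -/
def toM : FreeGroup (Gen X R) →* M X R := PresentedGroup.mk _

/-- The element of `M(G)` represented by a word on `X`. -/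
def embX : FreeGroup X →* M X R := (toM X R).comp (ofX X R)

/-- The element of `M(G)` represented by a word on `Θ`. -/
def embTh : FreeGroup (ThIdx X R) →* M X R :=
  (toM X R).comp (FreeGroup.map fun a => Sum.inr (Sum.inl a))

/-- The generator `x ∈ X` as element of `M(G)`. -/
def xM (x : X) : M X R := toM X R (xg X R x)

/-- The generator `θ_α` as element of `M(G)`. -/
def θM (a : ThIdx X R) : M X R := toM X R (θg X R a)

/-- The generator `q` as element of `M(G)`. -/
def qM : M X R := toM X R (qg X R)

/-- The subgroup `⟨X, q⟩` of `M(G)`. -/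
def XqSub : Subgroup (M X R) := Subgroup.closure (Set.range (xM X R) ∪ {qM X R})

/-- The subgroup `⟨Θ⟩` of `M(G)`. -/
def ThSub : Subgroup (M X R) := Subgroup.closure (Set.range (θM X R))

/-- The subgroup `H = ⟨X ∪ Θ⟩` of `M(G)`. -/
def Hgrp : Subgroup (M X R) := Subgroup.closure (Set.range (xM X R) ∪ Set.range (θM X R))

/-- The subgroup `K₋₁ = ⟨{θ_x x : x ∈ X} ∪ {θ_r : r ∈ R}⟩` of `M(G)`. -/
def Kneg : Subgroup (M X R) := Subgroup.closure
  ((Set.range fun x : X => θM X R (Sum.inl x) * xM X R x) ∪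
   (Set.range fun r : {r : FreeGroup X // r ∈ R} => θM X R (Sum.inr r)))

/-- The subgroup `K₁ = ⟨{θ_x x : x ∈ X} ∪ {θ_r r : r ∈ R}⟩` of `M(G)`. -/
def Kpos : Subgroup (M X R) := Subgroup.closure
  ((Set.range fun x : X => θM X R (Sum.inl x) * xM X R x) ∪
   (Set.range fun r : {r : FreeGroup X // r ∈ R} => θM X R (Sum.inr r) * embX X R r.1))

/-- `‖g‖`: the (reduced) word length of an element of a free group. -/
def wlen {β : Type} (g : FreeGroup β) : ℕ :=
  sInf {n | ∃ l : List (β × Bool), FreeGroup.mk l = g ∧ l.length = n}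

/-- `|g|`: word length in `M(G)` with respect to the generating set `X ∪ Θ ∪ {q}`. -/
def mlen (g : M X R) : ℕ :=
  sInf {n | ∃ w : FreeGroup (Gen X R), toM X R w = g ∧ wlen w = n}

/-- `c(u,v)`: the minimal length of a conjugator taking `u` to `v` in `M(G)`. -/
def c (u v : M X R) : ℕ :=
  sInf {n | ∃ γ : M X R, γ * u * γ⁻¹ = v ∧ mlen X R γ = n}

/-- `c'(u,v)`: the minimal length of a conjugator in `⟨X ∪ Θ⟩` taking `u` to `v`. -/
def c' (u v : M X R) : ℕ :=
  sInf {n | ∃ γ ∈ Hgrp X R, γ * u * γ⁻¹ = v ∧ mlen X R γ = n}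

/-- The product `∏_{i<m} w_i r_i w_i⁻¹`. -/
def prodConj (m : ℕ) (w r : ℕ → FreeGroup X) : FreeGroup X :=
  ((List.range m).map fun i => w i * r i * (w i)⁻¹).prod

/-- `r_0, …, r_{m-1} ∈ R^{±1}`. -/
def IsRelSeq (m : ℕ) (r : ℕ → FreeGroup X) : Prop := ∀ i < m, r i ∈ R ∨ (r i)⁻¹ ∈ R

/-- `δ(g)`: the least `m` such that `g` is freely equal to a product of `m`
conjugates of elements of `R^{±1}`. -/
def area (g : FreeGroup X) : ℕ :=
  sInf {m | ∃ w r : ℕ → FreeGroup X, IsRelSeq X R m r ∧ g = prodConj X m w r}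

/-- The Dehn function `Δ` of the presentation `⟨X ∣ R⟩`. -/
def Dehn (n : ℕ) : ℕ :=
  sSup {d | ∃ g : FreeGroup X, wlen g ≤ n ∧ toG X R g = 1 ∧ area X R g = d}

/-- `f(w) = m + ‖w₁‖ + ‖w_m‖ + ∑_{i=1}^{m-1} ‖w_i⁻¹ w_{i+1}‖` (with `0`-based indexing). -/
def fval (m : ℕ) (w : ℕ → FreeGroup X) : ℕ :=
  m + wlen (w 0) + wlen (w (m - 1)) + ∑ i ∈ Finset.range (m - 1), wlen ((w i)⁻¹ * w (i + 1))

/-- `λ(g)`: the minimum of `f(w)` over expressions `w = ∏ w_i r_i w_i⁻¹` freely equal to `g`. -/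
def lam (g : FreeGroup X) : ℕ :=
  sInf {n | ∃ (m : ℕ) (w r : ℕ → FreeGroup X),
    1 ≤ m ∧ IsRelSeq X R m r ∧ g = prodConj X m w r ∧ fval X m w = n}

/-- `Λ(n)`: the maximum of `λ(g)` over words `g` with `g =_G 1` and `‖g‖ ≤ n`. -/
def Lam (n : ℕ) : ℕ :=
  sSup {d | ∃ g : FreeGroup X, wlen g ≤ n ∧ toG X R g = 1 ∧ lam X R g = d}

/-- `t = max({‖r‖ : r ∈ R} ∪ {2})`. -/
def t : ℕ := max (R.sup fun r => wlen r) 2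

/-- `w, ε` witness the iso-computational list conjugacy `u ∼^σ v` (indices `0,…,k-1`,
with the convention that the index after `k-1` is `0`, i.e. `σ_{k+1} = σ₁`). -/
def IsICLCWitness (k : ℕ) (σ : ℕ → ℤ) (u v : ℕ → FreeGroup X) (w ε : FreeGroup X) : Prop :=
  toG X R ε = 1 ∧ ∀ i < k,
    (σ i = 1 ∧ σ ((i + 1) % k) = 1 → w * ε * u i * w⁻¹ = v i) ∧
    (σ i = 1 ∧ σ ((i + 1) % k) = -1 → w * ε * u i * ε⁻¹ * w⁻¹ = v i) ∧
    (σ i = -1 ∧ σ ((i + 1) % k) = 1 → w * u i * w⁻¹ = v i) ∧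
    (σ i = -1 ∧ σ ((i + 1) % k) = -1 → w * u i * ε⁻¹ * w⁻¹ = v i)

/-- Iso-computational list conjugacy `u ∼^σ v`. -/
def ICLC (k : ℕ) (σ : ℕ → ℤ) (u v : ℕ → FreeGroup X) : Prop :=
  ∃ w ε : FreeGroup X, IsICLCWitness X R k σ u v w ε

/-- `c_{k,σ}(u,v)`: the least `‖w‖` over witnessing pairs `(w, ε)` for `u ∼^σ v`. -/
def cList (k : ℕ) (σ : ℕ → ℤ) (u v : ℕ → FreeGroup X) : ℕ :=
  sInf {n | ∃ w ε : FreeGroup X, IsICLCWitness X R k σ u v w ε ∧ wlen w = n}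

/-- `C_{k,σ}(n)`. -/
def CC (k : ℕ) (σ : ℕ → ℤ) (n : ℕ) : ℕ :=
  sSup {d | ∃ u v : ℕ → FreeGroup X, ICLC X R k σ u v ∧
    (∑ i ∈ Finset.range k, (wlen (u i) + wlen (v i))) ≤ n - 2 * k ∧
    cList X R k σ u v = d}

/-- The alphabet `X ∪ {q}`. -/
abbrev Yt (X : Type) : Type := X ⊕ Unit

/-- The letter `q` in the free group `F(X ∪ {q})`. -/
def qY : FreeGroup (Yt X) := FreeGroup.of (Sum.inr ())

/-- A word on `X` as a word on `X ∪ {q}`. -/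
def embY : FreeGroup X →* FreeGroup (Yt X) := FreeGroup.map Sum.inl

/-- The element of `M(G)` represented by a word on `X ∪ {q}`. -/
def toMY : FreeGroup (Yt X) →* M X R :=
  (toM X R).comp (FreeGroup.map (Sum.elim Sum.inl fun u => Sum.inr (Sum.inr u)))

/-- The word `q^{σ₁}u₁q^{σ₂}u₂⋯q^{σ_k}u_k` on `X ∪ {q}` (`0`-based indexing). -/
def qword (k : ℕ) (σ : ℕ → ℤ) (u : ℕ → FreeGroup X) : FreeGroup (Yt X) :=
  ((List.range k).map fun i => qY X ^ σ i * embY X (u i)).prod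

/-- The word `q^{σ₁}u₁q^{σ₂}u₂⋯q^{σ_k}u_k` is (freely) reduced, expressed as:
its reduced length equals the sum of the lengths of its letters. -/
def ReducedForm (k : ℕ) (σ : ℕ → ℤ) (u : ℕ → FreeGroup X) : Prop :=
  wlen (qword X k σ u) = k + ∑ i ∈ Finset.range k, wlen (u i)

/-- The element `q^{σ₁}u₁q^{σ₂}u₂⋯q^{σ_k}u_k` of `M(G)`. -/
def qwordM (k : ℕ) (σ : ℕ → ℤ) (u : ℕ → FreeGroup X) : M X R :=
  toMY X R (qword X k σ u)

/-- `σ` is a tuple of signs `±1`. -/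
def IsSgn (k : ℕ) (σ : ℕ → ℤ) : Prop := ∀ i < k, σ i = 1 ∨ σ i = -1

/-- `D_{k,σ}(n)`: restriction of the conjugator length function of `M(G)` to conjugate
pairs `x = q^{σ₁}u₁⋯q^{σ_k}u_k`, `y = q^{σ₁}v₁⋯q^{σ_k}v_k` that are reduced words with
`∑ (‖u_i‖ + ‖v_i‖) ≤ n - 2k`. -/
def Dk (k : ℕ) (σ : ℕ → ℤ) (n : ℕ) : ℕ :=
  sSup {d | ∃ u v : ℕ → FreeGroup X,
    ReducedForm X k σ u ∧ ReducedForm X k σ v ∧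
    IsConj (qwordM X R k σ u) (qwordM X R k σ v) ∧
    (∑ i ∈ Finset.range k, (wlen (u i) + wlen (v i))) ≤ n - 2 * k ∧
    c X R (qwordM X R k σ u) (qwordM X R k σ v) = d}

/-- `D'_{k,σ}(n)`: as `D_{k,σ}(n)`, but for pairs conjugate via an element of `⟨X ∪ Θ⟩`
and with minimal conjugator length measured over conjugators in `⟨X ∪ Θ⟩`. -/
def Dk' (k : ℕ) (σ : ℕ → ℤ) (n : ℕ) : ℕ :=
  sSup {d | ∃ u v : ℕ → FreeGroup X,
    ReducedForm X k σ u ∧ ReducedForm X k σ v ∧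
    (∃ γ ∈ Hgrp X R, γ * qwordM X R k σ u * γ⁻¹ = qwordM X R k σ v) ∧
    (∑ i ∈ Finset.range k, (wlen (u i) + wlen (v i))) ≤ n - 2 * k ∧
    c' X R (qwordM X R k σ u) (qwordM X R k σ v) = d}

/-- `D₀(n)`: restriction of the conjugator length function of `M(G)` to pairs
`(qu, q)` with `u` a word on `X`, `qu` conjugate to `q`, and `‖u‖ ≤ n - 2`. -/
def D0 (n : ℕ) : ℕ :=
  sSup {d | ∃ u : FreeGroup X, wlen u ≤ n - 2 ∧
    IsConj (qM X R * embX X R u) (qM X R) ∧ c X R (qM X R * embX X R u) (qM X R) = d}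

/-- `D'₀(n)`: as `D₀(n)`, via conjugators in `⟨X ∪ Θ⟩`. -/
def D0' (n : ℕ) : ℕ :=
  sSup {d | ∃ u : FreeGroup X, wlen u ≤ n - 2 ∧
    (∃ γ ∈ Hgrp X R, γ * (qM X R * embX X R u) * γ⁻¹ = qM X R) ∧
    c' X R (qM X R * embX X R u) (qM X R) = d}

/-- The endomorphism `φ_α` of `F(X ∪ {q})`: it fixes each `x ∈ X` and sends `q` to
`α⁻¹qα` if `α ∈ X` and to `qα` if `α ∈ R`. -/
def phi (a : ThIdx X R) : FreeGroup (Yt X) →* FreeGroup (Yt X) :=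
  FreeGroup.lift fun s =>
    match s with
    | Sum.inl x => FreeGroup.of (Sum.inl x : Yt X)
    | Sum.inr _ =>
      match a with
      | Sum.inl x' => (FreeGroup.of (Sum.inl x' : Yt X))⁻¹ * qY X * FreeGroup.of (Sum.inl x')
      | Sum.inr r => qY X * embY X r.1

end

end Miller

namespace MillerAux

open Miller

noncomputable section

variable (X : Type) (R : Finset (FreeGroup X))

/-- The product `F(X) × F(Θ)`. -/
abbrev P : Type := FreeGroup X × FreeGroup (ThIdx X R)

lemma toM_rel {w : FreeGroup (Gen X R)} (h : w ∈ rels X R) : toM X R w = 1 :=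
  (QuotientGroup.eq_one_iff w).2 (Subgroup.subset_normalClosure h)

lemma embX_of (x : X) : embX X R (FreeGroup.of x) = xM X R x := by
  simp [embX, ofX, xM, xg]

lemma embTh_of (a : ThIdx X R) :
    embTh X R (FreeGroup.of a) = θM X R a := by
  simp [embTh, θM, θg]

lemma comm_gen (x : X) (a : ThIdx X R) : Commute (xM X R x) (θM X R a) := by
  have h := toM_rel X R (show θg X R a * xg X R x * (xg X R x * θg X R a)⁻¹ ∈ rels X R from
    Or.inl ⟨a, x, rfl⟩)
  rw [map_mul, map_inv, mul_inv_eq_one, map_mul, map_mul] at h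
  exact h.symm

lemma comm_xM_embTh (x : X) (v : FreeGroup (ThIdx X R)) :
    Commute (xM X R x) (embTh X R v) := by
  refine FreeGroup.induction_on v ?_ ?_ ?_ ?_
  · simpa using Commute.one_right (xM X R x)
  · intro a
    show Commute (xM X R x) (embTh X R (FreeGroup.of a))
    rw [embTh_of]; exact comm_gen X R x a
  · intro a h; rw [map_inv]; exact h.inv_right
  · intro u w hu hw; rw [map_mul]; exact hu.mul_right hw

lemma comm_embX_embTh (u : FreeGroup X) (v : FreeGroup (ThIdx X R)) :
    Commute (embX X R u) (embTh X R v) := by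
  refine FreeGroup.induction_on u ?_ ?_ ?_ ?_
  · simpa using Commute.one_left (embTh X R v)
  · intro x
    show Commute (embX X R (FreeGroup.of x)) (embTh X R v)
    rw [embX_of]; exact comm_xM_embTh X R x v
  · intro x h; rw [map_inv]; exact h.inv_left
  · intro a b ha hb; rw [map_mul]; exact ha.mul_left hb

/-- The natural homomorphism `F(X) × F(Θ) →* M(G)`. -/
def j : P X R →* M X R :=
  (embX X R).noncommCoprod (embTh X R) (comm_embX_embTh X R)

lemma j_apply (u : FreeGroup X) (v : FreeGroup (ThIdx X R)) :
    j X R (u, v) = embX X R u * embTh X R v := rfl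

lemma comm_embX_θM (u : FreeGroup X) (a : ThIdx X R) :
    Commute (embX X R u) (θM X R a) := by
  have := comm_embX_embTh X R u (FreeGroup.of a)
  rwa [embTh_of] at this

/-- The section `F(Θ) → F(X) × F(Θ)` corresponding to `K₋₁`. -/
def sneg : FreeGroup (ThIdx X R) →* P X R :=
  FreeGroup.lift fun a =>
    match a with
    | Sum.inl x => (FreeGroup.of x, FreeGroup.of (Sum.inl x : ThIdx X R))
    | Sum.inr r => (1, FreeGroup.of (Sum.inr r : ThIdx X R))

/-- The section `F(Θ) → F(X) × F(Θ)` corresponding to `K₁`. -/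
def spos : FreeGroup (ThIdx X R) →* P X R :=
  FreeGroup.lift fun a =>
    match a with
    | Sum.inl x => (FreeGroup.of x, FreeGroup.of (Sum.inl x : ThIdx X R))
    | Sum.inr r => (r.1, FreeGroup.of (Sum.inr r : ThIdx X R))

lemma snd_sneg (t : FreeGroup (ThIdx X R)) : (sneg X R t).2 = t := by
  have : (MonoidHom.snd _ _).comp (sneg X R) = MonoidHom.id _ := by
    apply FreeGroup.ext_hom; rintro (x | r) <;> simp [sneg]
  exact DFunLike.congr_fun this t

lemma snd_spos (t : FreeGroup (ThIdx X R)) : (spos X R t).2 = t := by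
  have : (MonoidHom.snd _ _).comp (spos X R) = MonoidHom.id _ := by
    apply FreeGroup.ext_hom; rintro (x | r) <;> simp [spos]
  exact DFunLike.congr_fun this t

lemma sneg_inj : Function.Injective (sneg X R) := fun a b h => by
  have := congrArg Prod.snd h; rwa [snd_sneg, snd_sneg] at this

lemma spos_inj : Function.Injective (spos X R) := fun a b h => by
  have := congrArg Prod.snd h; rwa [snd_spos, snd_spos] at this

/-- The isomorphism between the two associated subgroups of the HNN splitting. -/
def φhnn : ((sneg X R).range : Subgroup (P X R)) ≃* ((spos X R).range : Subgroup (P X R)) :=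
  (MonoidHom.ofInjective (sneg_inj X R)).symm.trans (MonoidHom.ofInjective (spos_inj X R))

lemma φhnn_apply (t : FreeGroup (ThIdx X R)) (h : sneg X R t ∈ (sneg X R).range) :
    φhnn X R ⟨sneg X R t, h⟩ = ⟨spos X R t, ⟨t, rfl⟩⟩ := by
  have h1 : MonoidHom.ofInjective (sneg_inj X R) t = ⟨sneg X R t, h⟩ :=
    Subtype.ext (MonoidHom.ofInjective_apply (sneg_inj X R))
  have h2 : (MonoidHom.ofInjective (sneg_inj X R)).symm ⟨sneg X R t, h⟩ = t := by
    rw [← h1, MulEquiv.symm_apply_apply]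
  show MonoidHom.ofInjective (spos_inj X R)
      ((MonoidHom.ofInjective (sneg_inj X R)).symm ⟨sneg X R t, h⟩) = _
  rw [h2]
  exact Subtype.ext (MonoidHom.ofInjective_apply (spos_inj X R))

/-- The HNN extension modelling `M(G)`. -/
abbrev HNN : Type := HNNExtension (P X R) (sneg X R).range (spos X R).range (φhnn X R)

/-- The images of the generators of `M(G)` inside the HNN extension. -/
def fgen : Gen X R → HNN X R
  | Sum.inl x => HNNExtension.of (FreeGroup.of x, 1)
  | Sum.inr (Sum.inl a) => HNNExtension.of (1, FreeGroup.of a)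
  | Sum.inr (Sum.inr _) => (HNNExtension.t)⁻¹

lemma of_sneg_mul (t : FreeGroup (ThIdx X R)) :
    (HNNExtension.of (sneg X R t) : HNN X R) * (HNNExtension.t)⁻¹ =
      (HNNExtension.t)⁻¹ * HNNExtension.of (spos X R t) := by
  have h := HNNExtension.of_mul_inv_t (φ := φhnn X R) ⟨sneg X R t, ⟨t, rfl⟩⟩
  exact h.trans (congrArg (fun p : P X R => (HNNExtension.t : HNN X R)⁻¹ * HNNExtension.of p)
    (congrArg Subtype.val (φhnn_apply X R t _)))

lemma lift_ofX (w : FreeGroup X) :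
    FreeGroup.lift (fgen X R) (ofX X R w) = HNNExtension.of (w, (1 : FreeGroup (ThIdx X R))) := by
  have : (FreeGroup.lift (fgen X R)).comp (ofX X R) =
      (HNNExtension.of (G := P X R)).comp (MonoidHom.inl _ _) := by
    apply FreeGroup.ext_hom; intro x
    simp [ofX, fgen]
  exact DFunLike.congr_fun this w

lemma relcheck : ∀ r ∈ rels X R, FreeGroup.lift (fgen X R) r = 1 := by
  rintro w (⟨a, x, rfl⟩ | ⟨x, rfl⟩ | ⟨r, rfl⟩) <;>
    simp only [map_mul, map_inv, θg, xg, qg, FreeGroup.lift_apply_of, mul_inv_eq_one, fgen]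
  · rw [← map_mul, ← map_mul, Prod.mk_mul_mk, Prod.mk_mul_mk, one_mul, mul_one, one_mul, mul_one]
  · have key := of_sneg_mul X R (FreeGroup.of (Sum.inl x))
    have h1 : sneg X R (FreeGroup.of (Sum.inl x)) =
        ((FreeGroup.of x, FreeGroup.of (Sum.inl x)) : P X R) := by simp [sneg]
    have h2 : spos X R (FreeGroup.of (Sum.inl x)) =
        ((FreeGroup.of x, FreeGroup.of (Sum.inl x)) : P X R) := by simp [spos]
    rw [h1, h2] at key
    rw [← map_mul, Prod.mk_mul_mk, one_mul, mul_one, mul_assoc, ← map_mul,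
      Prod.mk_mul_mk, one_mul, mul_one]
    exact key
  · have key := of_sneg_mul X R (FreeGroup.of (Sum.inr r))
    have h1 : sneg X R (FreeGroup.of (Sum.inr r)) =
        ((1 : FreeGroup X), FreeGroup.of (Sum.inr r : ThIdx X R)) := by simp [sneg]
    have h2 : spos X R (FreeGroup.of (Sum.inr r)) =
        (r.1, FreeGroup.of (Sum.inr r : ThIdx X R)) := by simp [spos]
    rw [h1, h2] at key
    rw [lift_ofX, mul_assoc, ← map_mul, Prod.mk_mul_mk, mul_one, one_mul]
    exact key

/-- The homomorphism `M(G) →* HNN`. -/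
def h : M X R →* HNN X R := PresentedGroup.toGroup (relcheck X R)

lemma h_embX (w : FreeGroup X) :
    h X R (embX X R w) = HNNExtension.of (w, (1 : FreeGroup (ThIdx X R))) := by
  have : (h X R).comp (embX X R) =
      (HNNExtension.of (G := P X R)).comp (MonoidHom.inl _ _) := by
    apply FreeGroup.ext_hom; intro x
    show h X R (embX X R (FreeGroup.of x)) = _
    rw [embX_of]
    exact PresentedGroup.toGroup.of (relcheck X R)
  exact DFunLike.congr_fun this w

lemma h_embTh (v : FreeGroup (ThIdx X R)) :
    h X R (embTh X R v) = HNNExtension.of ((1 : FreeGroup X), v) := by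
  have : (h X R).comp (embTh X R) =
      (HNNExtension.of (G := P X R)).comp (MonoidHom.inr _ _) := by
    apply FreeGroup.ext_hom; intro a
    show h X R (embTh X R (FreeGroup.of a)) = _
    rw [embTh_of]
    exact PresentedGroup.toGroup.of (relcheck X R)
  exact DFunLike.congr_fun this v

lemma h_j (p : P X R) : h X R (j X R p) = HNNExtension.of p := by
  obtain ⟨u, v⟩ := p
  rw [j_apply, map_mul, h_embX, h_embTh, ← map_mul, Prod.mk_mul_mk, mul_one, one_mul]

lemma j_inj : Function.Injective (j X R) := fun p p' hpp' => by
  apply HNNExtension.of_injective (G := P X R) (A := (sneg X R).range)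
    (B := (spos X R).range) (φ := φhnn X R)
  rw [← h_j, ← h_j, hpp']

lemma j_x (x : X) : j X R (FreeGroup.of x, 1) = xM X R x := by
  rw [j_apply, map_one, mul_one, embX_of]

lemma j_θ (a : ThIdx X R) : j X R (1, FreeGroup.of a) = θM X R a := by
  rw [j_apply, map_one, one_mul, embTh_of]

lemma range_j : (j X R).range = Hgrp X R := by
  apply le_antisymm
  · rintro m ⟨p, rfl⟩
    obtain ⟨u, v⟩ := p
    rw [j_apply]
    refine mul_mem ?_ ?_
    · have : embX X R u ∈ Subgroup.map (embX X R) ⊤ := ⟨u, trivial, rfl⟩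
      rw [← FreeGroup.closure_range_of X, MonoidHom.map_closure] at this
      refine Subgroup.closure_mono ?_ this
      rintro - ⟨-, ⟨x, rfl⟩, rfl⟩
      exact Or.inl ⟨x, (embX_of X R x).symm⟩
    · have : embTh X R v ∈ Subgroup.map (embTh X R) ⊤ := ⟨v, trivial, rfl⟩
      rw [← FreeGroup.closure_range_of (ThIdx X R), MonoidHom.map_closure] at this
      refine Subgroup.closure_mono ?_ this
      rintro - ⟨-, ⟨a, rfl⟩, rfl⟩
      exact Or.inr ⟨a, (embTh_of X R a).symm⟩
  · rw [Hgrp]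
    rw [Subgroup.closure_le]
    rintro - (⟨x, rfl⟩ | ⟨a, rfl⟩)
    · exact ⟨(FreeGroup.of x, 1), j_x X R x⟩
    · exact ⟨(1, FreeGroup.of a), j_θ X R a⟩

lemma j_mem (p : P X R) : j X R p ∈ Hgrp X R := by
  rw [← range_j]; exact ⟨p, rfl⟩

/-- The isomorphism `H ≃* F(X) × F(Θ)`. -/
def iso : (Hgrp X R) ≃* P X R :=
  (MulEquiv.subgroupCongr (range_j X R).symm).trans (MonoidHom.ofInjective (j_inj X R)).symm

lemma iso_j (p : P X R) (hp : j X R p ∈ Hgrp X R) : iso X R ⟨j X R p, hp⟩ = p := by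
  have h1 : MonoidHom.ofInjective (j_inj X R) p =
      ⟨j X R p, ⟨p, rfl⟩⟩ := Subtype.ext (MonoidHom.ofInjective_apply (j_inj X R))
  show (MonoidHom.ofInjective (j_inj X R)).symm
      ((MulEquiv.subgroupCongr (range_j X R).symm) ⟨j X R p, hp⟩) = p
  have h2 : (MulEquiv.subgroupCongr (range_j X R).symm) ⟨j X R p, hp⟩ =
      (⟨j X R p, ⟨p, rfl⟩⟩ : ((j X R).range : Subgroup (M X R))) := rfl
  rw [h2, ← h1, MulEquiv.symm_apply_apply]

/-- The homomorphism `φ : H →* F(Θ)`. -/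
def φH : (Hgrp X R) →* FreeGroup (ThIdx X R) :=
  (MonoidHom.snd _ _).comp (iso X R).toMonoidHom

lemma φH_j (p : P X R) (hp : j X R p ∈ Hgrp X R) : φH X R ⟨j X R p, hp⟩ = p.2 := by
  show (iso X R ⟨j X R p, hp⟩).2 = p.2
  rw [iso_j]

lemma φH_val {m : M X R} (hm : m ∈ Hgrp X R) (p : P X R) (hp : j X R p = m) :
    φH X R ⟨m, hm⟩ = p.2 := by
  subst hp; exact φH_j X R p hm

lemma j_pair_x (x : X) :
    j X R (FreeGroup.of x, FreeGroup.of (Sum.inl x)) = θM X R (Sum.inl x) * xM X R x := by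
  rw [j_apply, embX_of, embTh_of]
  exact (comm_gen X R x (Sum.inl x)).eq

lemma j_pair_r (r : {r : FreeGroup X // r ∈ R}) :
    j X R (r.1, FreeGroup.of (Sum.inr r)) = θM X R (Sum.inr r) * embX X R r.1 := by
  rw [j_apply, embTh_of]
  exact (comm_embX_θM X R r.1 (Sum.inr r)).eq

lemma j_sneg_x (x : X) :
    j X R (sneg X R (FreeGroup.of (Sum.inl x))) = θM X R (Sum.inl x) * xM X R x := by
  have h1 : sneg X R (FreeGroup.of (Sum.inl x)) =
      ((FreeGroup.of x, FreeGroup.of (Sum.inl x)) : P X R) := by simp [sneg]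
  rw [h1, j_apply, embX_of, embTh_of]
  exact (comm_gen X R x (Sum.inl x)).eq

lemma j_sneg_r (r : {r : FreeGroup X // r ∈ R}) :
    j X R (sneg X R (FreeGroup.of (Sum.inr r))) = θM X R (Sum.inr r) := by
  have h1 : sneg X R (FreeGroup.of (Sum.inr r)) =
      ((1 : FreeGroup X), FreeGroup.of (Sum.inr r : ThIdx X R)) := by simp [sneg]
  rw [h1, j_θ]

lemma j_spos_x (x : X) :
    j X R (spos X R (FreeGroup.of (Sum.inl x))) = θM X R (Sum.inl x) * xM X R x := by
  have h1 : spos X R (FreeGroup.of (Sum.inl x)) =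
      ((FreeGroup.of x, FreeGroup.of (Sum.inl x)) : P X R) := by simp [spos]
  rw [h1, j_apply, embX_of, embTh_of]
  exact (comm_gen X R x (Sum.inl x)).eq

lemma j_spos_r (r : {r : FreeGroup X // r ∈ R}) :
    j X R (spos X R (FreeGroup.of (Sum.inr r))) = θM X R (Sum.inr r) * embX X R r.1 := by
  have h1 : spos X R (FreeGroup.of (Sum.inr r)) =
      (r.1, FreeGroup.of (Sum.inr r : ThIdx X R)) := by simp [spos]
  rw [h1, j_apply, embTh_of]
  exact (comm_embX_θM X R r.1 (Sum.inr r)).eq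

lemma Kneg_eq : Kneg X R = ((j X R).comp (sneg X R)).range := by
  have hr : ((j X R).comp (sneg X R)).range =
      Subgroup.closure (Set.range fun a : ThIdx X R => j X R (sneg X R (FreeGroup.of a))) := by
    rw [MonoidHom.range_eq_map, ← FreeGroup.closure_range_of (ThIdx X R),
      MonoidHom.map_closure, ← Set.range_comp]
    rfl
  rw [hr, Kneg]
  apply le_antisymm <;> rw [Subgroup.closure_le]
  · rintro - (⟨x, rfl⟩ | ⟨r, rfl⟩)
    · exact Subgroup.subset_closure ⟨Sum.inl x, j_sneg_x X R x⟩
    · exact Subgroup.subset_closure ⟨Sum.inr r, j_sneg_r X R r⟩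
  · rintro - ⟨a, rfl⟩
    show j X R (sneg X R (FreeGroup.of a)) ∈ _
    rcases a with x | r
    · rw [j_sneg_x]
      exact Subgroup.subset_closure (Or.inl ⟨x, rfl⟩)
    · rw [j_sneg_r]
      exact Subgroup.subset_closure (Or.inr ⟨r, rfl⟩)

lemma Kpos_eq : Kpos X R = ((j X R).comp (spos X R)).range := by
  have hr : ((j X R).comp (spos X R)).range =
      Subgroup.closure (Set.range fun a : ThIdx X R => j X R (spos X R (FreeGroup.of a))) := by
    rw [MonoidHom.range_eq_map, ← FreeGroup.closure_range_of (ThIdx X R),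
      MonoidHom.map_closure, ← Set.range_comp]
    rfl
  rw [hr, Kpos]
  apply le_antisymm <;> rw [Subgroup.closure_le]
  · rintro - (⟨x, rfl⟩ | ⟨r, rfl⟩)
    · exact Subgroup.subset_closure ⟨Sum.inl x, j_spos_x X R x⟩
    · exact Subgroup.subset_closure ⟨Sum.inr r, j_spos_r X R r⟩
  · rintro - ⟨a, rfl⟩
    show j X R (spos X R (FreeGroup.of a)) ∈ _
    rcases a with x | r
    · rw [j_spos_x]
      exact Subgroup.subset_closure (Or.inl ⟨x, rfl⟩)
    · rw [j_spos_r]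
      exact Subgroup.subset_closure (Or.inr ⟨r, rfl⟩)

lemma bij_aux (s : FreeGroup (ThIdx X R) →* P X R) (hsnd : ∀ t, (s t).2 = t)
    (K : Subgroup (M X R)) (hK : K = ((j X R).comp s).range) :
    Function.Bijective
      (fun g : {g : (Hgrp X R) // (g : M X R) ∈ K} => φH X R g.1) := by
  rw [Function.bijective_iff_has_inverse]
  refine ⟨fun t => ⟨⟨j X R (s t), j_mem X R _⟩, by rw [hK]; exact ⟨t, rfl⟩⟩, ?_, ?_⟩
  · intro g
    obtain ⟨t, ht⟩ : ∃ t, j X R (s t) = (g.1 : M X R) := by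
      exact (SetLike.ext_iff.mp hK _).mp g.2
    have hg1 : g.1 = ⟨j X R (s t), j_mem X R _⟩ := Subtype.ext ht.symm
    have hφ : φH X R g.1 = t := by rw [hg1, φH_j]; exact hsnd t
    simp only [hφ]
    exact Subtype.ext hg1.symm
  · intro t
    show φH X R ⟨j X R (s t), _⟩ = t
    rw [φH_j]; exact hsnd t

end

end MillerAux

open Miller in
/-- The subgroup `H = ⟨X ∪ Θ⟩` of `M(G)` is isomorphic to the direct
product `F(X) × F(Θ)`. Moreover, the homomorphism `φ : H → F(Θ)` defined by `φ(x) = 1` for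
`x ∈ X` and `φ(θ_α) = θ_α` for `α ∈ X ∪ R` restricts to an isomorphism from `K₋₁` onto
`F(Θ)`, and the homomorphism `φ' : H → F(Θ)` defined by `φ'(θ_x x) = θ_x`, `φ'(θ_r r) = θ_r`
restricts to an isomorphism from `K₁` onto `F(Θ)`. In particular, `K₋₁` is a free group
freely generated by `{θ_x x : x ∈ X} ∪ {θ_r : r ∈ R}` and `K₁` is a free group freely
generated by `{θ_x x : x ∈ X} ∪ {θ_r r : r ∈ R}`. -/
theorem statement4 (X : Type) [Fintype X] (R : Finset (FreeGroup X)) (hR : R.Nonempty) :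
    Nonempty (↥(Hgrp X R) ≃* FreeGroup X × FreeGroup (ThIdx X R)) ∧
    (∃ φ : ↥(Hgrp X R) →* FreeGroup (ThIdx X R),
      (∀ (x : X) (h : xM X R x ∈ Hgrp X R), φ ⟨xM X R x, h⟩ = 1) ∧
      (∀ (a : ThIdx X R) (h : θM X R a ∈ Hgrp X R), φ ⟨θM X R a, h⟩ = FreeGroup.of a) ∧
      Function.Bijective
        (fun g : {g : ↥(Hgrp X R) // (g : M X R) ∈ Kneg X R} => φ g.1)) ∧
    (∃ φ' : ↥(Hgrp X R) →* FreeGroup (ThIdx X R),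
      (∀ (x : X) (h : θM X R (Sum.inl x) * xM X R x ∈ Hgrp X R),
        φ' ⟨θM X R (Sum.inl x) * xM X R x, h⟩ = FreeGroup.of (Sum.inl x : ThIdx X R)) ∧
      (∀ (r : {r : FreeGroup X // r ∈ R}) (h : θM X R (Sum.inr r) * embX X R r.1 ∈ Hgrp X R),
        φ' ⟨θM X R (Sum.inr r) * embX X R r.1, h⟩ = FreeGroup.of (Sum.inr r : ThIdx X R)) ∧
      Function.Bijective
        (fun g : {g : ↥(Hgrp X R) // (g : M X R) ∈ Kpos X R} => φ' g.1)) := by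
  classical
  refine ⟨⟨MillerAux.iso X R⟩,
    ⟨MillerAux.φH X R, ?_, ?_, ?_⟩, ⟨MillerAux.φH X R, ?_, ?_, ?_⟩⟩
  · intro x h
    exact MillerAux.φH_val X R h (FreeGroup.of x, 1) (MillerAux.j_x X R x)
  · intro a h
    exact MillerAux.φH_val X R h (1, FreeGroup.of a) (MillerAux.j_θ X R a)
  · exact MillerAux.bij_aux X R (MillerAux.sneg X R) (MillerAux.snd_sneg X R) _
      (MillerAux.Kneg_eq X R)
  · intro x h
    exact MillerAux.φH_val X R h (FreeGroup.of x, FreeGroup.of (Sum.inl x))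
      (MillerAux.j_pair_x X R x)
  · intro r h
    exact MillerAux.φH_val X R h (r.1, FreeGroup.of (Sum.inr r))
      (MillerAux.j_pair_r X R r)
  · exact MillerAux.bij_aux X R (MillerAux.spos X R) (MillerAux.snd_spos X R) _
      (MillerAux.Kpos_eq X R)
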